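/- Let G be a finite p-group such that Z(G) ⊆ [x, G] for every x in G not in the commutator subgroup γ_2(G), where [x,G] = {[x,g] : g ∈ G}. Then |Aut_c(G)| ≥ |Autcent(G)| · |G/Z_2(G)|, where Z_2(G) is the second center of G. -/

import Mathlib

/-- The group of class-preserving automorphisms of `G`. -/

def Autc (G : Type*) [Group G] : Subgroup (MulAut G) where
  carrier := {φ | ∀ g : G, ∃ h : G, φ g = h⁻¹ * g * h}
  one_mem' := fun g => ⟨1, by simp⟩
  mul_mem' := by
    intro φ ψ hφ hψ g
    obtain ⟨h, hh⟩ := hψ g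
    obtain ⟨k, hk⟩ := hφ g
    refine ⟨k * φ h, ?_⟩
    rw [MulAut.mul_apply, hh, map_mul, map_mul, map_inv, hk]
    group
  inv_mem' := by
    intro φ hφ g
    obtain ⟨h, hh⟩ := hφ (φ⁻¹ g)
    have h1 : g = h⁻¹ * φ⁻¹ g * h := by simpa using hh
    refine ⟨h⁻¹, ?_⟩
    rw [inv_inv]
    revert h1
    generalize φ⁻¹ g = X
    intro h1
    rw [h1]
    group

/-- If `G` is a finite `p`-group with `Z(G) ⊆ [x, G]` for all `x ∉ γ₂(G)`, then
`|Aut_c(G)| ≥ |Autcent(G)| · |G/Z₂(G)|`. -/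
theorem autc_card_ge {G : Type*} [Group G] [Fintype G] {p : ℕ}
    (hp : p.Prime) (hG : IsPGroup p G)
    (hZ : ∀ x : G, x ∉ commutator G →
      (Subgroup.center G : Set G) ⊆ {c : G | ∃ g : G, c = x⁻¹ * g⁻¹ * x * g}) :
    Nat.card {φ : MulAut G // ∀ g : G, g⁻¹ * φ g ∈ Subgroup.center G} *
        Nat.card (G ⧸ upperCentralSeries G 2) ≤ Nat.card (Autc G) := by
  classical
  have hfin : Finite (MulAut G) :=
    Finite.of_injective (fun φ => (φ : G → G)) DFunLike.coe_injective
  -- central automorphisms are closed under mul and inv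
  have hC_mul : ∀ φ ψ : MulAut G, (∀ g : G, g⁻¹ * φ g ∈ Subgroup.center G) →
      (∀ g : G, g⁻¹ * ψ g ∈ Subgroup.center G) →
      ∀ g : G, g⁻¹ * (φ * ψ) g ∈ Subgroup.center G := by
    intro φ ψ hφ hψ g
    have h1 := hψ g
    have h2 := hφ (ψ g)
    have : g⁻¹ * (φ * ψ) g = (g⁻¹ * ψ g) * ((ψ g)⁻¹ * φ (ψ g)) := by
      simp [MulAut.mul_apply]
    rw [this]
    exact mul_mem h1 h2
  have hC_inv : ∀ φ : MulAut G, (∀ g : G, g⁻¹ * φ g ∈ Subgroup.center G) →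
      ∀ g : G, g⁻¹ * φ⁻¹ g ∈ Subgroup.center G := by
    intro φ hφ g
    have h1 := hφ (φ⁻¹ g)
    have h2 : φ (φ⁻¹ g) = g := by simp
    rw [h2] at h1
    have : g⁻¹ * φ⁻¹ g = ((φ⁻¹ g)⁻¹ * g)⁻¹ := by group
    rw [this]
    exact inv_mem h1
  -- a central automorphism is class-preserving
  have hcentral_autc : ∀ φ : MulAut G, (∀ g : G, g⁻¹ * φ g ∈ Subgroup.center G) →
      φ ∈ Autc G := by
    intro φ hφ g
    by_cases hg : g ∈ commutator G
    · -- φ fixes the commutator subgroup pointwise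
      let μ : G →* Subgroup.center G :=
        { toFun := fun x => ⟨x⁻¹ * φ x, hφ x⟩
          map_one' := by ext; simp
          map_mul' := by
            intro x y
            ext
            show (x * y)⁻¹ * φ (x * y) = (x⁻¹ * φ x) * (y⁻¹ * φ y)
            have h := Subgroup.mem_center_iff.mp (hφ x) y⁻¹
            calc (x * y)⁻¹ * φ (x * y) = y⁻¹ * (x⁻¹ * φ x) * φ y := by
                  rw [map_mul, mul_inv_rev]; simp [mul_assoc]
              _ = (x⁻¹ * φ x) * y⁻¹ * φ y := by rw [h]
              _ = (x⁻¹ * φ x) * (y⁻¹ * φ y) := by rw [mul_assoc] }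
    -- center of a group is commutative, so commutators die
      have hk : μ g = 1 := MonoidHom.mem_ker.mp (by letI : CommGroup (Subgroup.center G) := { (Subgroup.center G).toGroup with mul_comm := mul_comm' }; exact Abelianization.commutator_subset_ker (A := Subgroup.center G) μ hg)
      have hk' : g⁻¹ * φ g = 1 := congrArg Subtype.val hk
      rw [inv_mul_eq_one] at hk'
      exact ⟨1, by simpa using hk'.symm⟩
    · obtain ⟨k, hk⟩ := hZ g hg (hφ g)
      refine ⟨k, ?_⟩
      have : φ g = g * (g⁻¹ * φ g) := by group
      rw [this, hk]; group
  -- inner automorphisms are class-preserving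
  have hconj_autc : ∀ a : G, MulAut.conj a ∈ Autc G := by
    intro a g
    refine ⟨a⁻¹, ?_⟩
    simp [MulAut.conj_apply]
  -- the injection
  set Z2 := upperCentralSeries G 2 with hZ2
  let f : {φ : MulAut G // ∀ g : G, g⁻¹ * φ g ∈ Subgroup.center G} × (G ⧸ Z2) → Autc G :=
    fun x => ⟨x.1.1 * MulAut.conj x.2.out, (Autc G).mul_mem (hcentral_autc _ x.1.2) (hconj_autc _)⟩
  have hinj : Function.Injective f := by
    rintro ⟨φ, q⟩ ⟨ψ, r⟩ h
    have h' : φ.1 * MulAut.conj q.out = ψ.1 * MulAut.conj r.out := congrArg Subtype.val h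
    set a := q.out with ha
    set b := r.out with hb
    have hco : ψ.1⁻¹ * φ.1 = MulAut.conj (b * a⁻¹) := by
      rw [map_mul, map_inv]
      calc ψ.1⁻¹ * φ.1 = ψ.1⁻¹ * (φ.1 * MulAut.conj a) * (MulAut.conj a)⁻¹ := by group
        _ = ψ.1⁻¹ * (ψ.1 * MulAut.conj b) * (MulAut.conj a)⁻¹ := by rw [h']
        _ = MulAut.conj b * (MulAut.conj a)⁻¹ := by group
    have hcent : ∀ g : G, g⁻¹ * MulAut.conj (b * a⁻¹) g ∈ Subgroup.center G := by
      intro g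
      rw [← hco]
      exact hC_mul _ _ (hC_inv _ ψ.2) φ.2 g
    have hmem : b * a⁻¹ ∈ Z2 := by
      rw [hZ2, show (2 : ℕ) = 1 + 1 from rfl]; show b * a⁻¹ ∈ Subgroup.upperCentralSeries G (1 + 1); rw [Subgroup.mem_upperCentralSeries_succ_iff]
      intro y
      rw [upperCentralSeries_one]
      have := hcent y⁻¹
      simp only [MulAut.conj_apply] at this
      have h2 : (b * a⁻¹) * y * (b * a⁻¹)⁻¹ * y⁻¹ = (y⁻¹⁻¹ * (b * a⁻¹ * y⁻¹ * (b * a⁻¹)⁻¹))⁻¹ := by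
        group
      rw [commutatorElement_def, h2]
      exact inv_mem (by simpa [mul_assoc] using this)
    have hmem' : a⁻¹ * b ∈ Z2 := by
      have hn : Z2.Normal := by show (Subgroup.upperCentralSeries G 2).Normal; infer_instance
      have := hn.conj_mem _ hmem a⁻¹
      simpa [mul_assoc] using this
    have hq : q = r := by
      rw [← QuotientGroup.out_eq' q, ← QuotientGroup.out_eq' r, QuotientGroup.eq]
      exact hmem'
    have hab : a = b := by rw [ha, hb, hq]
    have hφψ : φ = ψ := by
      apply Subtype.ext
      have := h'
      rw [hab] at this
      exact mul_right_cancel this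
    exact Prod.ext hφψ hq
  calc Nat.card {φ : MulAut G // ∀ g : G, g⁻¹ * φ g ∈ Subgroup.center G} *
        Nat.card (G ⧸ upperCentralSeries G 2)
      = Nat.card ({φ : MulAut G // ∀ g : G, g⁻¹ * φ g ∈ Subgroup.center G} × (G ⧸ Z2)) := by
        rw [Nat.card_prod]
    _ ≤ Nat.card (Autc G) := Nat.card_le_card_of_injective f hinj
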